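/- arXiv:1812.10014 — 3 statements merged into one kernel-verified Lean document; each statement's English description precedes it below -/
import Mathlib

section
/- Let f₁, f₂ be functions analytic in a neighborhood of the origin and not identically zero, and let 0 < |q| < 1. Define the Jackson q-Casorati determinant C_J(f₁,f₂)(z) = f₁(z)·D_q f₂(z) - f₂(z)·D_q f₁(z). Then f₁ and f₂ are linearly independent over ℂ if and only if C_J(f₁,f₂) is not identically zero (on a punctured neighborhood of 0). -/
noncomputable def Dq (q : ℂ) (f : ℂ → ℂ) (z : ℂ) : ℂ := (f (q * z) - f z) / ((q - 1) * z)

/-- Jackson q-Casorati determinant. -/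
noncomputable def CJ (q : ℂ) (f₁ f₂ : ℂ → ℂ) (z : ℂ) : ℂ :=
  f₁ z * Dq q f₂ z - f₂ z * Dq q f₁ z

open Metric Filter Topology

theorem jackson_casorati_indep_iff (q : ℂ) (hq0 : 0 < ‖q‖)
    (hq1 : ‖q‖ < 1) (f₁ f₂ : ℂ → ℂ) (r : ℝ) (hr : 0 < r)
    (hf₁ : AnalyticOnNhd ℂ f₁ (Metric.ball (0 : ℂ) r))
    (hf₂ : AnalyticOnNhd ℂ f₂ (Metric.ball (0 : ℂ) r))
    (hne₁ : ∃ z ∈ Metric.ball (0 : ℂ) r, f₁ z ≠ 0)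
    (hne₂ : ∃ z ∈ Metric.ball (0 : ℂ) r, f₂ z ≠ 0) :
    (∀ a b : ℂ, (∀ z ∈ Metric.ball (0 : ℂ) r, a * f₁ z + b * f₂ z = 0) → a = 0 ∧ b = 0) ↔
      ∃ z ∈ Metric.ball (0 : ℂ) r, z ≠ 0 ∧ CJ q f₁ f₂ z ≠ 0 := by
  have hq : q ≠ 0 := by
    intro h; rw [h] at hq0; simp at hq0
  have hq1' : q ≠ 1 := by
    intro h; rw [h] at hq1; simp at hq1
  have h0 : (0 : ℂ) ∈ Metric.ball (0 : ℂ) r := by simpa using hr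
  have hmul : ∀ z : ℂ, z ∈ Metric.ball (0 : ℂ) r → q * z ∈ Metric.ball (0 : ℂ) r := by
    intro z hz
    simp only [Metric.mem_ball, dist_zero_right] at hz ⊢
    calc ‖q * z‖ = ‖q‖ * ‖z‖ := norm_mul _ _
      _ ≤ 1 * ‖z‖ := by
          apply mul_le_mul_of_nonneg_right _ (norm_nonneg z)
          exact le_of_lt hq1
      _ = ‖z‖ := one_mul _
      _ < r := hz
  constructor
  · -- forward direction, by contradiction
    intro hli
    by_contra hC
    push_neg at hC
    -- CJ vanishes identically, so the cross relation holds everywhere on the ball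
    have F : ∀ z ∈ Metric.ball (0 : ℂ) r, f₁ z * f₂ (q * z) = f₂ z * f₁ (q * z) := by
      intro z hz
      rcases eq_or_ne z 0 with rfl | hz0
      · simp [mul_comm]
      · have hCz := hC z hz hz0
        have hd : (q - 1) * z ≠ 0 := mul_ne_zero (sub_ne_zero.mpr hq1') hz0
        unfold CJ Dq at hCz
        field_simp at hCz
        linear_combination hCz
    have hball : IsPreconnected (Metric.ball (0 : ℂ) r) := (convex_ball (0 : ℂ) r).isPreconnected
    have hnev : ∀ (f : ℂ → ℂ), AnalyticOnNhd ℂ f (Metric.ball (0 : ℂ) r) →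
        (∃ z ∈ Metric.ball (0 : ℂ) r, f z ≠ 0) → ¬ (∀ᶠ z in 𝓝 (0 : ℂ), f z = 0) := by
      rintro f hf ⟨z, hzb, hzne⟩ hev
      exact hzne (hf.eqOn_zero_of_preconnected_of_eventuallyEq_zero hball h0
        (hev.mono fun w hw => by simpa using hw) hzb)
    have ha₁ : AnalyticAt ℂ f₁ 0 := hf₁ 0 h0
    have ha₂ : AnalyticAt ℂ f₂ 0 := hf₂ 0 h0
    obtain ⟨m, hm⟩ := WithTop.ne_top_iff_exists.mp
      (show analyticOrderAt f₁ 0 ≠ ⊤ by rw [Ne, analyticOrderAt_eq_top]; exact hnev f₁ hf₁ hne₁)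
    obtain ⟨n, hn⟩ := WithTop.ne_top_iff_exists.mp
      (show analyticOrderAt f₂ 0 ≠ ⊤ by rw [Ne, analyticOrderAt_eq_top]; exact hnev f₂ hf₂ hne₂)
    obtain ⟨g₁, hg₁a, hg₁0, ev₁⟩ := (ha₁.analyticOrderAt_eq_natCast (n := m)).mp hm.symm
    obtain ⟨g₂, hg₂a, hg₂0, ev₂⟩ := (ha₂.analyticOrderAt_eq_natCast (n := n)).mp hn.symm
    have hqt : Filter.Tendsto (fun z : ℂ => q * z) (𝓝 0) (𝓝 0) := by
      have h := (continuous_const.mul continuous_id : Continuous fun z : ℂ => q * z).tendsto 0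
      have h2 : Tendsto (fun z : ℂ => q * z) (𝓝 0) (𝓝 (q * 0)) := h
      simpa only [mul_zero] using h2
    have ev₁q : ∀ᶠ z in 𝓝 (0 : ℂ), f₁ (q * z) = (q * z - 0) ^ m • g₁ (q * z) := hqt.eventually ev₁
    have ev₂q : ∀ᶠ z in 𝓝 (0 : ℂ), f₂ (q * z) = (q * z - 0) ^ n • g₂ (q * z) := hqt.eventually ev₂
    have evF : ∀ᶠ z in 𝓝 (0 : ℂ), f₁ z * f₂ (q * z) = f₂ z * f₁ (q * z) :=
      Filter.eventually_of_mem (Metric.ball_mem_nhds 0 hr) F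
    set φ : ℂ → ℂ := fun z => q ^ n * (g₁ z * g₂ (q * z)) - q ^ m * (g₂ z * g₁ (q * z)) with hφdef
    have evφ : ∀ᶠ z in 𝓝 (0 : ℂ), z ^ (m + n) * φ z = 0 := by
      filter_upwards [ev₁, ev₂, ev₁q, ev₂q, evF] with z h1 h2 h1q h2q hF
      simp only [sub_zero, smul_eq_mul, mul_pow] at h1 h2 h1q h2q
      rw [h1, h2, h1q, h2q] at hF
      simp only [hφdef]
      ring_nf
      ring_nf at hF
      linear_combination hF
    have c1 : ContinuousAt (fun z : ℂ => g₂ (q * z)) 0 := by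
      have h2 : ContinuousAt g₂ (q * 0) := by simpa using hg₂a.continuousAt
      exact h2.comp (continuous_const.mul continuous_id).continuousAt
    have c2 : ContinuousAt (fun z : ℂ => g₁ (q * z)) 0 := by
      have h2 : ContinuousAt g₁ (q * 0) := by simpa using hg₁a.continuousAt
      exact h2.comp (continuous_const.mul continuous_id).continuousAt
    have hφc : ContinuousAt φ 0 :=
      ((continuousAt_const.mul (hg₁a.continuousAt.mul c1)).sub
        (continuousAt_const.mul (hg₂a.continuousAt.mul c2)))
    have evφ' : ∀ᶠ z in 𝓝[≠] (0 : ℂ), φ z = 0 := by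
      filter_upwards [evφ.filter_mono nhdsWithin_le_nhds, self_mem_nhdsWithin] with z h hz
      exact (mul_eq_zero.mp h).resolve_left (pow_ne_zero _ hz)
    have hφ0 : φ 0 = 0 := by
      have t1 : Filter.Tendsto φ (𝓝[≠] (0 : ℂ)) (𝓝 (φ 0)) :=
        hφc.continuousWithinAt.tendsto
      have t2 : Filter.Tendsto φ (𝓝[≠] (0 : ℂ)) (𝓝 0) :=
        tendsto_const_nhds.congr' (evφ'.mono fun z h => h.symm)
      exact tendsto_nhds_unique t1 t2
    have hmn : m = n := by
      have h00 : g₁ 0 * g₂ 0 ≠ 0 := by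
        exact mul_ne_zero hg₁0 hg₂0
      have hqnm : q ^ n = q ^ m := by
        have h := sub_eq_zero.mp hφ0
        simp only [mul_zero] at h
        exact mul_right_cancel₀ h00 (by linear_combination h)
      have habs : ‖q‖ ^ m = ‖q‖ ^ n := by
        rw [← norm_pow, ← norm_pow, hqnm]
      exact (pow_right_strictAnti₀ hq0 hq1).injective habs
    subst hmn
    have evψ : ∀ᶠ z in 𝓝 (0 : ℂ), g₁ z * g₂ (q * z) = g₂ z * g₁ (q * z) := by
      rw [eventually_nhdsWithin_iff] at evφ'
      filter_upwards [evφ'] with z h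
      rcases eq_or_ne z 0 with rfl | hz
      · simp [mul_comm]
      · have hz' := h (by simpa using hz)
        simp only [hφdef] at hz'
        have hqm : q ^ m ≠ 0 := pow_ne_zero _ hq
        exact mul_left_cancel₀ hqm (by linear_combination hz')
    have evg₁ : ∀ᶠ z in 𝓝 (0 : ℂ), g₁ z ≠ 0 := hg₁a.continuousAt.eventually_ne hg₁0
    obtain ⟨ε, hε, hball'⟩ := Metric.eventually_nhds_iff.mp (evψ.and evg₁)
    set c : ℂ := g₂ 0 / g₁ 0 with hcdef
    have hdq : ∀ z : ℂ, dist z 0 < ε → dist (q * z) 0 < ε := by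
      intro z hz
      simp only [dist_zero_right] at hz ⊢
      calc ‖q * z‖ = ‖q‖ * ‖z‖ := norm_mul _ _
        _ ≤ 1 * ‖z‖ := mul_le_mul_of_nonneg_right (le_of_lt hq1) (norm_nonneg z)
        _ = ‖z‖ := one_mul _
        _ < ε := hz
    have key : ∀ z : ℂ, dist z 0 < ε → g₂ z = c * g₁ z := by
      intro z hzd
      have hzk : ∀ k : ℕ, dist (q ^ k * z) 0 < ε := by
        intro k
        induction k with
        | zero => simpa using hzd
        | succ k ih =>
            have := hdq _ ih
            rw [pow_succ]
            convert this using 2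
            ring
      have hiter : ∀ k : ℕ, g₂ (q ^ k * z) / g₁ (q ^ k * z) = g₂ z / g₁ z := by
        intro k
        induction k with
        | zero => simp
        | succ k ih =>
            obtain ⟨hrel, hg1⟩ := hball' (hzk k)
            have hg1q : g₁ (q * (q ^ k * z)) ≠ 0 := by
              have := (hball' (hdq _ (hzk k))).2
              exact this
            rw [← ih]
            have heq : (q : ℂ) ^ (k + 1) * z = q * (q ^ k * z) := by ring
            rw [heq]
            rw [div_eq_div_iff hg1q hg1]
            linear_combination hrel
      have tz : Filter.Tendsto (fun k : ℕ => q ^ k * z) Filter.atTop (𝓝 0) := by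
        have h := tendsto_pow_atTop_nhds_zero_of_norm_lt_one
          (x := q) hq1
        simpa using h.mul_const z
      have hcont : ContinuousAt (fun w : ℂ => g₂ w / g₁ w) 0 :=
        hg₂a.continuousAt.div hg₁a.continuousAt hg₁0
      have t1 : Filter.Tendsto (fun k : ℕ => g₂ (q ^ k * z) / g₁ (q ^ k * z))
          Filter.atTop (𝓝 c) := hcont.tendsto.comp tz
      have t2 : Filter.Tendsto (fun k : ℕ => g₂ (q ^ k * z) / g₁ (q ^ k * z))
          Filter.atTop (𝓝 (g₂ z / g₁ z)) := by
        simp only [hiter]; exact tendsto_const_nhds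
      have hzc : g₂ z / g₁ z = c := tendsto_nhds_unique t2 t1
      have hg1z := (hball' hzd).2
      rwa [div_eq_iff hg1z] at hzc
    have evf : ∀ᶠ z in 𝓝 (0 : ℂ), f₂ z = c * f₁ z := by
      have hεev : ∀ᶠ z in 𝓝 (0 : ℂ), dist z 0 < ε :=
        Filter.eventually_of_mem (Metric.ball_mem_nhds 0 hε) (fun z hz => by
          simpa [Metric.mem_ball] using hz)
      filter_upwards [ev₁, ev₂, hεev] with z h1 h2 hzd
      rw [h1, h2, key z hzd]
      simp only [smul_eq_mul]
      ring
    have heq : Set.EqOn f₂ (fun z => c * f₁ z) (Metric.ball (0 : ℂ) r) :=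
      hf₂.eqOn_of_preconnected_of_eventuallyEq
        (fun z hz => analyticAt_const.mul (hf₁ z hz)) hball h0 (evf.mono fun z h => h)
    have hcontra := hli c (-1) (fun z hz => by rw [heq hz]; ring)
    have : (-1 : ℂ) = 0 := hcontra.2
    norm_num at this
  · -- reverse direction
    rintro ⟨z₀, hz₀b, hz₀, hCJ⟩ a b hab
    have hqz₀ : q * z₀ ∈ Metric.ball (0 : ℂ) r := hmul z₀ hz₀b
    have ha : a = 0 := by
      by_contra ha
      have hf : ∀ z ∈ Metric.ball (0 : ℂ) r, f₁ z = -(b / a) * f₂ z := by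
        intro z hz
        have h := hab z hz
        field_simp
        linear_combination h
      apply hCJ
      unfold CJ Dq
      rw [hf z₀ hz₀b, hf (q * z₀) hqz₀]
      ring
    refine ⟨ha, ?_⟩
    obtain ⟨w, hw, hfw⟩ := hne₂
    have h := hab w hw
    rw [ha] at h
    simp only [zero_mul, zero_add] at h
    exact (mul_eq_zero.mp h).resolve_right hfw
end

section
/- Let 0 < |q| < 1, let A be analytic at the origin with A not identically zero, and let f₁, f₂ be linearly independent solutions, analytic at the origin, of D_q² f(z) + A(z) f(z) = 0. Then the Jackson q-Casorati determinant C(z) = f₁(z)·D_q f₂(z) - f₂(z)·D_q f₁(z) satisfies D_q C(z) = A(z)·(q-1)·z·C(z), and in particular D_q C is not identically zero, i.e., C ∉ Ker(D_q). -/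
private lemma apply_q_mul {q : ℂ} (f : ℂ → ℂ) {z : ℂ} (hz : (q - 1) * z ≠ 0) :
    f (q * z) = f z + ((q - 1) * z) * Dq q f z := by
  unfold Dq; rw [mul_div_assoc', mul_div_cancel_left₀ _ hz]; ring

theorem jackson_casorati_not_in_kernel (q : ℂ) (hq0 : 0 < ‖q‖)
    (hq1 : ‖q‖ < 1) (A f₁ f₂ : ℂ → ℂ) (r : ℝ) (hr : 0 < r)
    (hA : AnalyticOnNhd ℂ A (Metric.ball (0 : ℂ) r))
    (hAne : ∃ z ∈ Metric.ball (0 : ℂ) r, A z ≠ 0)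
    (hf₁ : AnalyticOnNhd ℂ f₁ (Metric.ball (0 : ℂ) r))
    (hf₂ : AnalyticOnNhd ℂ f₂ (Metric.ball (0 : ℂ) r))
    (heq₁ : ∀ z ∈ Metric.ball (0 : ℂ) r, z ≠ 0 → Dq q (Dq q f₁) z + A z * f₁ z = 0)
    (heq₂ : ∀ z ∈ Metric.ball (0 : ℂ) r, z ≠ 0 → Dq q (Dq q f₂) z + A z * f₂ z = 0)
    (hindep : ∀ a b : ℂ, (∀ z ∈ Metric.ball (0 : ℂ) r, a * f₁ z + b * f₂ z = 0) →
      a = 0 ∧ b = 0) :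
    (∀ z ∈ Metric.ball (0 : ℂ) r, z ≠ 0 →
        Dq q (CJ q f₁ f₂) z = A z * (q - 1) * z * CJ q f₁ f₂ z) ∧
      ∃ z ∈ Metric.ball (0 : ℂ) r, z ≠ 0 ∧ Dq q (CJ q f₁ f₂) z ≠ 0 := by
  have hq : q ≠ 0 := by
    intro h; simp [h] at hq0
  have hqn1 : ‖q‖ < 1 := by simpa using hq1
  have hq1' : q - 1 ≠ 0 := by
    intro h
    have : q = 1 := by linear_combination h
    simp [this] at hq1
  -- Part 1 : the Casorati determinant identity
  have key : ∀ z ∈ Metric.ball (0 : ℂ) r, z ≠ 0 →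
      Dq q (CJ q f₁ f₂) z = A z * (q - 1) * z * CJ q f₁ f₂ z := by
    intro z hz hz0
    have hw : (q - 1) * z ≠ 0 := mul_ne_zero hq1' hz0
    have e1 : Dq q (Dq q f₁) z = -(A z * f₁ z) := by linear_combination heq₁ z hz hz0
    have e2 : Dq q (Dq q f₂) z = -(A z * f₂ z) := by linear_combination heq₂ z hz hz0
    have h1 := apply_q_mul (q := q) f₁ hw
    have h2 := apply_q_mul (q := q) f₂ hw
    have h3 := apply_q_mul (q := q) (Dq q f₁) hw
    have h4 := apply_q_mul (q := q) (Dq q f₂) hw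
    rw [e1] at h3
    rw [e2] at h4
    have hDq : Dq q (CJ q f₁ f₂) z
        = (CJ q f₁ f₂ (q * z) - CJ q f₁ f₂ z) / ((q - 1) * z) := rfl
    rw [hDq]
    simp only [CJ]
    rw [h1, h2, h3, h4]
    field_simp
    ring
  refine ⟨key, ?_⟩
  by_contra hcon
  push_neg at hcon
  set S := Metric.ball (0 : ℂ) r with hS
  have hSc : IsPreconnected S := (convex_ball (0 : ℂ) r).isPreconnected
  have h0mem : (0 : ℂ) ∈ S := Metric.mem_ball_self hr
  have hqball : ∀ {s : ℝ} {z : ℂ}, z ∈ Metric.ball (0 : ℂ) s → q * z ∈ Metric.ball (0 : ℂ) s := by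
    intro s z hz
    rw [mem_ball_zero_iff] at hz ⊢
    calc ‖q * z‖ = ‖q‖ * ‖z‖ := norm_mul _ _
    _ ≤ ‖z‖ := mul_le_of_le_one_left (norm_nonneg _) hqn1.le
    _ < s := hz
  -- the auxiliary entire-style function g
  set g : ℂ → ℂ := fun z => f₁ z * f₂ (q * z) - f₂ z * f₁ (q * z) with hgdef
  have hqmul : ∀ z : ℂ, AnalyticAt ℂ (fun w : ℂ => q * w) z := fun z =>
    analyticAt_const.mul analyticAt_id
  have hg : AnalyticOnNhd ℂ g S := by
    intro z hz
    exact ((hf₁ z hz).mul ((hf₂ (q * z) (hqball hz)).comp (hqmul z))).sub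
      ((hf₂ z hz).mul ((hf₁ (q * z) (hqball hz)).comp (hqmul z)))
  have hgC : ∀ z : ℂ, z ≠ 0 → g z = ((q - 1) * z) * CJ q f₁ f₂ z := by
    intro z hz
    have hw : (q - 1) * z ≠ 0 := mul_ne_zero hq1' hz
    simp only [hgdef, CJ, Dq]
    field_simp
    ring
  have hg0 : ∀ z ∈ S, z ≠ 0 → A z ≠ 0 → g z = 0 := by
    intro z hz hz0 hAz
    have h := (key z hz hz0).symm.trans (hcon z hz hz0)
    have hC : CJ q f₁ f₂ z = 0 :=
      (mul_eq_zero.mp h).resolve_left (mul_ne_zero (mul_ne_zero hAz hq1') hz0)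
    rw [hgC z hz0, hC, mul_zero]
  obtain ⟨z₁, hz₁, hA1⟩ := hAne
  have hfreq : ∃ᶠ z in nhdsWithin z₁ {z₁}ᶜ, g z = 0 := by
    have hev : ∀ᶠ z in nhds z₁, z ∈ S ∧ A z ≠ 0 :=
      (Metric.isOpen_ball.eventually_mem hz₁).and ((hA z₁ hz₁).continuousAt.eventually_ne hA1)
    apply Filter.Eventually.frequently
    filter_upwards [eventually_nhdsWithin_of_eventually_nhds hev] with z hz
    rcases eq_or_ne z 0 with h0 | h0
    · simp only [hgdef, h0, mul_zero]; ring
    · exact hg0 z hz.1 h0 hz.2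
  have hgzero : Set.EqOn g 0 S :=
    hg.eqOn_zero_of_preconnected_of_frequently_eq_zero hSc hz₁ hfreq
  -- neither f₁ nor f₂ vanishes identically near 0
  have hnev : ∀ f : ℂ → ℂ, AnalyticOnNhd ℂ f S → (∀ z ∈ S, f z = 0) → False → True := fun _ _ _ _ => trivial
  have hne₁ : ¬ (∀ᶠ z in nhds (0 : ℂ), f₁ z = 0) := by
    intro h
    have hEq : Set.EqOn f₁ 0 S :=
      hf₁.eqOn_zero_of_preconnected_of_eventuallyEq_zero hSc h0mem
        (h.mono fun z hz => by simpa using hz)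
    have := hindep 1 0 (fun z hz => by simp [hEq hz])
    exact one_ne_zero this.1
  have hne₂ : ¬ (∀ᶠ z in nhds (0 : ℂ), f₂ z = 0) := by
    intro h
    have hEq : Set.EqOn f₂ 0 S :=
      hf₂.eqOn_zero_of_preconnected_of_eventuallyEq_zero hSc h0mem
        (h.mono fun z hz => by simpa using hz)
    have := hindep 0 1 (fun z hz => by simp [hEq hz])
    exact one_ne_zero this.2
  have h₁0 : AnalyticAt ℂ f₁ 0 := hf₁ 0 h0mem
  have h₂0 : AnalyticAt ℂ f₂ 0 := hf₂ 0 h0mem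
  have hfin₁ : analyticOrderAt f₁ 0 ≠ ⊤ := fun h => hne₁ (analyticOrderAt_eq_top.mp h)
  have hfin₂ : analyticOrderAt f₂ 0 ≠ ⊤ := fun h => hne₂ (analyticOrderAt_eq_top.mp h)
  obtain ⟨k, hk⟩ : ∃ k : ℕ, analyticOrderAt f₁ 0 = k := ⟨(analyticOrderAt f₁ 0).toNat, (ENat.coe_toNat hfin₁).symm⟩
  obtain ⟨m, hm⟩ : ∃ m : ℕ, analyticOrderAt f₂ 0 = m := ⟨(analyticOrderAt f₂ 0).toNat, (ENat.coe_toNat hfin₂).symm⟩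
  obtain ⟨u, hu, hu0, huev⟩ := (h₁0.analyticOrderAt_eq_natCast (n := k)).mp hk
  obtain ⟨v, hv, hv0, hvev⟩ := (h₂0.analyticOrderAt_eq_natCast (n := m)).mp hm
  have hueq : ∀ᶠ z in nhds (0 : ℂ), f₁ z = z ^ k * u z ∧ f₂ z = z ^ m * v z ∧ u z ≠ 0 := by
    filter_upwards [huev, hvev, hu.continuousAt.eventually_ne hu0] with z h1 h2 h3
    refine ⟨by simpa [smul_eq_mul] using h1, by simpa [smul_eq_mul] using h2, h3⟩
  obtain ⟨ε, hεpos, hballε⟩ := Metric.eventually_nhds_iff_ball.mp hueq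
  set ε₀ : ℝ := min ε r with hε₀def
  have hε₀pos : 0 < ε₀ := lt_min hεpos hr
  have props : ∀ z ∈ Metric.ball (0 : ℂ) ε₀,
      f₁ z = z ^ k * u z ∧ f₂ z = z ^ m * v z ∧ u z ≠ 0 :=
    fun z hz => hballε z (Metric.ball_subset_ball (min_le_left _ _) hz)
  have hsub : Metric.ball (0 : ℂ) ε₀ ⊆ S := Metric.ball_subset_ball (min_le_right _ _)
  set F : ℂ → ℂ := fun z => q ^ m * u z * v (q * z) - q ^ k * v z * u (q * z) with hFdef
  have hFz : ∀ z ∈ Metric.ball (0 : ℂ) ε₀, z ≠ 0 → F z = 0 := by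
    intro z hz hz0
    have hzq : q * z ∈ Metric.ball (0 : ℂ) ε₀ := hqball hz
    have hp := props z hz
    have hpq := props (q * z) hzq
    have hgz : g z = 0 := hgzero (hsub hz)
    rw [hgdef] at hgz
    simp only at hgz
    rw [hp.1, hp.2.1, hpq.1, hpq.2.1, mul_pow, mul_pow] at hgz
    have hzp : z ^ (k + m) ≠ 0 := pow_ne_zero _ hz0
    have hfac : z ^ (k + m) * F z = 0 := by
      simp only [hFdef]
      rw [pow_add]
      linear_combination hgz
    exact (mul_eq_zero.mp hfac).resolve_left hzp
  -- continuity of F at 0 gives q^m = q^k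
  have hvq : AnalyticAt ℂ (fun z : ℂ => v (q * z)) 0 := by
    have hv' : AnalyticAt ℂ v (q * 0) := by simpa using hv
    exact hv'.comp (hqmul 0)
  have huq : AnalyticAt ℂ (fun z : ℂ => u (q * z)) 0 := by
    have hu' : AnalyticAt ℂ u (q * 0) := by simpa using hu
    exact hu'.comp (hqmul 0)
  have hFc : ContinuousAt F 0 := by
    have : AnalyticAt ℂ F 0 :=
      ((analyticAt_const.mul hu).mul hvq).sub ((analyticAt_const.mul hv).mul huq)
    exact this.continuousAt
  have hqpow : Filter.Tendsto (fun n : ℕ => q ^ n) Filter.atTop (nhds 0) :=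
    tendsto_pow_atTop_nhds_zero_of_norm_lt_one hqn1
  have hseqmem : ∀ n : ℕ, ((ε₀ / 2 : ℝ) : ℂ) * q ^ n ∈ Metric.ball (0 : ℂ) ε₀ := by
    intro n
    rw [mem_ball_zero_iff, norm_mul, norm_pow]
    have h1 : ‖((ε₀ / 2 : ℝ) : ℂ)‖ = ε₀ / 2 := by
      rw [Complex.norm_real, Real.norm_of_nonneg (by linarith)]
    rw [h1]
    have h2 : ‖q‖ ^ n ≤ 1 := pow_le_one₀ (norm_nonneg _) hqn1.le
    nlinarith
  have hseqne : ∀ n : ℕ, ((ε₀ / 2 : ℝ) : ℂ) * q ^ n ≠ 0 := by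
    intro n
    refine mul_ne_zero ?_ (pow_ne_zero _ hq)
    simpa using (by positivity : ε₀ / 2 ≠ 0)
  have hF0 : F 0 = 0 := by
    have hzn : Filter.Tendsto (fun n : ℕ => ((ε₀ / 2 : ℝ) : ℂ) * q ^ n) Filter.atTop (nhds 0) := by
      simpa using hqpow.const_mul ((ε₀ / 2 : ℝ) : ℂ)
    have h1 : Filter.Tendsto (fun n : ℕ => F (((ε₀ / 2 : ℝ) : ℂ) * q ^ n)) Filter.atTop
        (nhds (F 0)) := (hFc.tendsto).comp hzn
    have h2 : ∀ n : ℕ, F (((ε₀ / 2 : ℝ) : ℂ) * q ^ n) = 0 :=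
      fun n => hFz _ (hseqmem n) (hseqne n)
    simp only [h2] at h1
    exact tendsto_nhds_unique h1 tendsto_const_nhds
  have hqmk : q ^ m = q ^ k := by
    have : q ^ m * (u 0 * v 0) = q ^ k * (u 0 * v 0) := by
      simp only [hFdef, mul_zero] at hF0
      linear_combination hF0
    exact mul_right_cancel₀ (mul_ne_zero hu0 hv0) this
  have hmk : m = k := by
    have habs : ‖q‖ ^ m = ‖q‖ ^ k := by
      simpa [norm_pow] using congrArg norm hqmk
    rcases lt_trichotomy m k with h | h | h
    · exact absurd habs.symm (ne_of_lt (pow_lt_pow_right_of_lt_one₀ hq0 hq1 h))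
    · exact h
    · exact absurd habs (ne_of_lt (pow_lt_pow_right_of_lt_one₀ hq0 hq1 h))
  -- the functional equation for u, v
  have props' : ∀ z ∈ Metric.ball (0 : ℂ) ε₀,
      f₁ z = z ^ k * u z ∧ f₂ z = z ^ k * v z ∧ u z ≠ 0 := by
    intro z hz
    obtain ⟨a, b, c⟩ := props z hz
    exact ⟨a, by rw [b, hmk], c⟩
  have E : ∀ z ∈ Metric.ball (0 : ℂ) ε₀, u z * v (q * z) = v z * u (q * z) := by
    intro z hz
    rcases eq_or_ne z 0 with h0 | h0
    · rw [h0, mul_zero]; ring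
    · have hF := hFz z hz h0
      simp only [hFdef] at hF
      rw [hqmk] at hF
      have hqk : (q : ℂ) ^ k ≠ 0 := pow_ne_zero _ hq
      refine mul_left_cancel₀ hqk ?_
      linear_combination hF
  have horbit : ∀ (n : ℕ) (z : ℂ), z ∈ Metric.ball (0 : ℂ) ε₀ →
      q ^ n * z ∈ Metric.ball (0 : ℂ) ε₀ := by
    intro n z hz
    rw [mem_ball_zero_iff] at hz ⊢
    calc ‖q ^ n * z‖ = ‖q‖ ^ n * ‖z‖ := by rw [norm_mul, norm_pow]
    _ ≤ 1 * ‖z‖ := by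
        have : ‖q‖ ^ n ≤ 1 := pow_le_one₀ (norm_nonneg _) hqn1.le
        nlinarith [norm_nonneg z]
    _ < ε₀ := by rwa [one_mul]
  have hstep : ∀ z ∈ Metric.ball (0 : ℂ) ε₀, ∀ n : ℕ,
      u z * v (q ^ n * z) = v z * u (q ^ n * z) := by
    intro z hz n
    induction n with
    | zero => simp only [pow_zero, one_mul]; ring
    | succ n ih =>
      have hw := horbit n z hz
      have hE := E (q ^ n * z) hw
      have hune := (props' (q ^ n * z) hw).2.2
      have harg : q ^ (n + 1) * z = q * (q ^ n * z) := by ring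
      rw [harg]
      exact mul_left_cancel₀ hune (by linear_combination u z * hE + u (q * (q ^ n * z)) * ih)
  have hlim : ∀ z ∈ Metric.ball (0 : ℂ) ε₀, u z * v 0 = v z * u 0 := by
    intro z hz
    have h1 : Filter.Tendsto (fun n : ℕ => q ^ n * z) Filter.atTop (nhds 0) := by
      simpa using hqpow.mul_const z
    have h2 : Filter.Tendsto (fun n : ℕ => u z * v (q ^ n * z)) Filter.atTop
        (nhds (u z * v 0)) :=
      tendsto_const_nhds.mul ((hv.continuousAt.tendsto).comp h1)
    have h3 : Filter.Tendsto (fun n : ℕ => v z * u (q ^ n * z)) Filter.atTop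
        (nhds (v z * u 0)) :=
      tendsto_const_nhds.mul ((hu.continuousAt.tendsto).comp h1)
    have hfn : ∀ n : ℕ, u z * v (q ^ n * z) = v z * u (q ^ n * z) := hstep z hz
    simp only [hfn] at h2
    exact tendsto_nhds_unique h2 h3
  -- conclude linear dependence
  have hdep : ∀ z ∈ S, v 0 * f₁ z + (-(u 0)) * f₂ z = 0 := by
    have hloc : ∀ᶠ z in nhds (0 : ℂ), v 0 * f₁ z + (-(u 0)) * f₂ z = 0 := by
      filter_upwards [Metric.ball_mem_nhds (0 : ℂ) hε₀pos] with z hz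
      have hp := props' z hz
      rw [hp.1, hp.2.1]
      linear_combination z ^ k * hlim z hz
    have hEq : Set.EqOn (fun z => v 0 * f₁ z + (-(u 0)) * f₂ z) 0 S :=
      AnalyticOnNhd.eqOn_zero_of_preconnected_of_eventuallyEq_zero
        (fun z hz => (analyticAt_const.mul (hf₁ z hz)).add (analyticAt_const.mul (hf₂ z hz)))
        hSc h0mem (hloc.mono fun z h => by simpa using h)
    intro z hz
    simpa using hEq hz
  exact hv0 (hindep (v 0) (-(u 0)) hdep).1
end

section
/- Let 0 < |q| < 1 and let P be a polynomial. Define f(z) = ∏_{j=0}^∞ (1 + (1-q) q^j z P(q^j z)). This product converges locally uniformly on ℂ, so f is entire, and f satisfies the Jackson q-difference equation D_q f(z) = P(z)·f(qz) for all z ≠ 0; equivalently f(z) = (1 + (1-q) z P(z))·f(qz). -/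
open Filter Topology Metric Finset

namespace JacksonAux

noncomputable def u (q : ℂ) (P : Polynomial ℂ) (j : ℕ) (z : ℂ) : ℂ :=
  (1 - q) * q ^ j * z * Polynomial.eval (q ^ j * z) P

variable (q : ℂ) (P : Polynomial ℂ)

lemma exists_bound (hq1 : ‖q‖ < 1) (R : ℝ) (hR : 0 ≤ R) :
    ∃ M : ℕ → ℝ, Summable M ∧ (∀ j, 0 ≤ M j) ∧
      ∀ j, ∀ z ∈ closedBall (0 : ℂ) R, ‖u q P j z‖ ≤ M j := by
  obtain ⟨w0, hw0, hw⟩ := (isCompact_closedBall (0 : ℂ) R).exists_isMaxOn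
    ⟨0, mem_closedBall_self hR⟩ ((P.continuous.norm).continuousOn)
  rw [isMaxOn_iff] at hw
  set C := ‖P.eval w0‖ with hC
  refine ⟨fun j => ‖q‖ ^ j * (‖1 - q‖ * R * C), ?_, ?_, ?_⟩
  · exact (summable_geometric_of_lt_one (norm_nonneg q) hq1).mul_right _
  · intro j; positivity
  · intro j z hz
    rw [mem_closedBall_zero_iff] at hz
    have harg : q ^ j * z ∈ closedBall (0 : ℂ) R := by
      rw [mem_closedBall_zero_iff, norm_mul, norm_pow]
      calc ‖q‖ ^ j * ‖z‖ ≤ 1 * R := by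
            exact mul_le_mul (pow_le_one₀ (norm_nonneg q) hq1.le) hz (norm_nonneg z) one_pos.le
        _ = R := one_mul R
    have hPe : ‖Polynomial.eval (q ^ j * z) P‖ ≤ C := hw _ harg
    calc ‖u q P j z‖ = ‖1 - q‖ * ‖q‖ ^ j * ‖z‖ * ‖Polynomial.eval (q ^ j * z) P‖ := by
          simp [u, norm_mul, norm_pow]
      _ ≤ ‖1 - q‖ * ‖q‖ ^ j * R * C := by gcongr
      _ = ‖q‖ ^ j * (‖1 - q‖ * R * C) := by ring

lemma summable_u (hq1 : ‖q‖ < 1) (z : ℂ) : Summable fun j => ‖u q P j z‖ := by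
  obtain ⟨M, hM, _, hMb⟩ := exists_bound q P hq1 ‖z‖ (norm_nonneg z)
  exact hM.of_nonneg_of_le (fun _ => norm_nonneg _)
    (fun j => hMb j z (by simp [mem_closedBall_zero_iff]))

lemma mult (hq1 : ‖q‖ < 1) (z : ℂ) : Multipliable fun j : ℕ => 1 + u q P j z := by
  by_cases h : ∀ j, 1 + u q P j z ≠ 0
  · have hu0 : Tendsto (fun j => ‖u q P j z‖) atTop (𝓝 0) :=
      (summable_u q P hq1 z).tendsto_atTop_zero
    have hev : ∀ᶠ j in atTop, ‖Complex.log (1 + u q P j z)‖ ≤ 3 / 2 * ‖u q P j z‖ := by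
      filter_upwards [hu0.eventually_le_const (by norm_num : (0:ℝ) < 1/2)] with j hj
      exact Complex.norm_log_one_add_half_le_self hj
    have hs : Summable fun j => Complex.log (1 + u q P j z) :=
      Summable.of_norm_bounded_eventually_nat (((summable_u q P hq1 z).mul_left (3/2))) hev
    have hp := hs.hasSum.cexp
    have heq : (Complex.exp ∘ fun j => Complex.log (1 + u q P j z)) =
        fun j => 1 + u q P j z := funext fun j => Complex.exp_log (h j)
    rw [heq] at hp
    exact ⟨_, hp⟩
  · push_neg at h
    obtain ⟨j0, hj0⟩ := h
    refine ⟨0, ?_⟩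
    have hev : ∀ᶠ s : Finset ℕ in atTop, (0 : ℂ) = ∏ i ∈ s, (1 + u q P i z) := by
      filter_upwards [eventually_ge_atTop ({j0} : Finset ℕ)] with s hs
      exact (Finset.prod_eq_zero (hs (Finset.mem_singleton_self j0)) hj0).symm
    exact tendsto_const_nhds.congr' hev

lemma diff_u (j : ℕ) : Differentiable ℂ (u q P j) := by
  have h1 : Differentiable ℂ fun z : ℂ => (1 - q) * q ^ j * z := differentiable_id.const_mul _
  have h2 : Differentiable ℂ fun z : ℂ => Polynomial.eval (q ^ j * z) P :=
    P.differentiable.comp (differentiable_id.const_mul _)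
  exact h1.mul h2

lemma diff_F (n : ℕ) : Differentiable ℂ (fun z => ∏ j ∈ range n, (1 + u q P j z)) := by
  induction n with
  | zero => simpa using differentiable_const (1 : ℂ)
  | succ n ih =>
      simp only [prod_range_succ]
      exact ih.mul ((differentiable_const 1).add (diff_u q P n))

lemma F_eq (n : ℕ) (z : ℂ) : ∏ j ∈ range n, (1 + u q P j z) =
    1 + ∑ j ∈ range n, u q P j z * ∏ i ∈ range j, (1 + u q P i z) := by
  induction n with
  | zero => simp
  | succ n ih => rw [prod_range_succ, sum_range_succ, ih]; ring

lemma diff_tprod (hq1 : ‖q‖ < 1) :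
    Differentiable ℂ (fun z => ∏' j : ℕ, (1 + u q P j z)) := by
  intro z0
  set R : ℝ := ‖z0‖ + 1 with hR
  have hR0 : 0 ≤ R := by positivity
  obtain ⟨M, hM, hM0, hMb⟩ := exists_bound q P hq1 R hR0
  set T : ℝ := ∑' j, M j with hT
  -- bound on partial products
  have hFb : ∀ j : ℕ, ∀ z ∈ closedBall (0 : ℂ) R,
      ‖∏ i ∈ range j, (1 + u q P i z)‖ ≤ Real.exp T := by
    intro j z hz
    calc ‖∏ i ∈ range j, (1 + u q P i z)‖ ≤ ∏ i ∈ range j, ‖1 + u q P i z‖ :=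
          norm_prod_le _ _
      _ ≤ ∏ i ∈ range j, (1 + M i) := by
          refine Finset.prod_le_prod (fun i _ => norm_nonneg _) (fun i _ => ?_)
          calc ‖1 + u q P i z‖ ≤ ‖(1 : ℂ)‖ + ‖u q P i z‖ := norm_add_le _ _
            _ ≤ 1 + M i := by rw [norm_one]; exact add_le_add_right (hMb i z hz) 1
      _ ≤ ∏ i ∈ range j, Real.exp (M i) := by
          refine Finset.prod_le_prod (fun i _ => by linarith [hM0 i]) (fun i _ => ?_)
          linarith [Real.add_one_le_exp (M i)]
      _ = Real.exp (∑ i ∈ range j, M i) := (Real.exp_sum _ _).symm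
      _ ≤ Real.exp T := Real.exp_le_exp.mpr (Summable.sum_le_tsum _ (fun i _ => hM0 i) hM)
  -- uniform convergence of the telescoped series
  have hser : TendstoUniformlyOn
      (fun n z => ∑ j ∈ range n, u q P j z * ∏ i ∈ range j, (1 + u q P i z))
      (fun z => ∑' j, u q P j z * ∏ i ∈ range j, (1 + u q P i z)) atTop
      (closedBall (0 : ℂ) R) := by
    refine tendstoUniformlyOn_tsum_nat (hM.mul_right (Real.exp T)) (fun j z hz => ?_)
    rw [norm_mul]
    exact mul_le_mul (hMb j z hz) (hFb j z hz) (norm_nonneg _) (hM0 j)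
  have hser1 : TendstoUniformlyOn
      (fun n z => ∏ j ∈ range n, (1 + u q P j z))
      (fun z => 1 + ∑' j, u q P j z * ∏ i ∈ range j, (1 + u q P i z)) atTop
      (closedBall (0 : ℂ) R) := by
    have := ((tendsto_const_nhds : Filter.Tendsto (fun _ : ℕ => (1:ℂ)) atTop (𝓝 1)).tendstoUniformlyOn_const
      (closedBall (0:ℂ) R)).add hser
    exact this.congr (Eventually.of_forall (fun n z hz => (F_eq q P n z).symm))
  -- identify the limit with the tprod
  have hlim : ∀ z ∈ closedBall (0 : ℂ) R,
      (1 + ∑' j, u q P j z * ∏ i ∈ range j, (1 + u q P i z)) = ∏' j : ℕ, (1 + u q P j z) := by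
    intro z hz
    have h1 : Tendsto (fun n => ∏ j ∈ range n, (1 + u q P j z)) atTop
        (𝓝 (∏' j : ℕ, (1 + u q P j z))) := (mult q P hq1 z).hasProd.tendsto_prod_nat
    have h2 : Tendsto (fun n => ∏ j ∈ range n, (1 + u q P j z)) atTop
        (𝓝 (1 + ∑' j, u q P j z * ∏ i ∈ range j, (1 + u q P i z))) :=
      hser1.tendsto_at hz
    exact tendsto_nhds_unique h2 h1
  have hTU : TendstoUniformlyOn
      (fun n z => ∏ j ∈ range n, (1 + u q P j z))
      (fun z => ∏' j : ℕ, (1 + u q P j z)) atTop (closedBall (0 : ℂ) R) :=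
    hser1.congr_right hlim
  have hTLU : TendstoLocallyUniformlyOn
      (fun n z => ∏ j ∈ range n, (1 + u q P j z))
      (fun z => ∏' j : ℕ, (1 + u q P j z)) atTop (ball (0 : ℂ) R) :=
    (hTU.tendstoLocallyUniformlyOn).mono ball_subset_closedBall
  have hdiff : DifferentiableOn ℂ (fun z => ∏' j : ℕ, (1 + u q P j z)) (ball (0 : ℂ) R) :=
    hTLU.differentiableOn
      (Eventually.of_forall fun n => (diff_F q P n).differentiableOn) isOpen_ball
  have hz0 : z0 ∈ ball (0 : ℂ) R := by
    rw [mem_ball_zero_iff]; simp only [hR]; linarith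
  exact hdiff.differentiableAt (isOpen_ball.mem_nhds hz0)

lemma shift (z : ℂ) : (fun j : ℕ => 1 + u q P j (q * z)) = fun j : ℕ => 1 + u q P (j + 1) z := by
  funext j
  have harg : q ^ j * (q * z) = q ^ (j + 1) * z := by rw [pow_succ]; ring
  simp only [u, harg]
  rw [pow_succ]
  ring

lemma func_eq (hq1 : ‖q‖ < 1) (z : ℂ) :
    (∏' j : ℕ, (1 + u q P j z)) = (1 + u q P 0 z) * ∏' j : ℕ, (1 + u q P j (q * z)) := by
  rw [shift]
  exact tprod_eq_zero_mul' (by rw [← shift]; exact mult q P hq1 (q * z))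

end JacksonAux

open JacksonAux

theorem jackson_product_solution (q : ℂ) (hq0 : 0 < ‖q‖)
    (hq1 : ‖q‖ < 1) (P : Polynomial ℂ) :
    let f : ℂ → ℂ := fun z => ∏' j : ℕ, (1 + (1 - q) * q ^ j * z * P.eval (q ^ j * z))
    (∀ z : ℂ, Multipliable (fun j : ℕ => (1 + (1 - q) * q ^ j * z * P.eval (q ^ j * z)))) ∧
    Differentiable ℂ f ∧
    (∀ z : ℂ, f z = (1 + (1 - q) * z * P.eval z) * f (q * z)) ∧
    (∀ z : ℂ, z ≠ 0 → Dq q f z = P.eval z * f (q * z)) := by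
  intro f
  have hq1' : ‖q‖ < 1 := hq1
  have hfz : ∀ z : ℂ, f z = ∏' j : ℕ, (1 + u q P j z) := fun z => rfl
  have h3 : ∀ z : ℂ, f z = (1 + (1 - q) * z * P.eval z) * f (q * z) := by
    intro z
    rw [hfz, hfz, func_eq q P hq1' z]
    congr 1
    simp [u]
  refine ⟨fun z => mult q P hq1' z, diff_tprod q P hq1', h3, ?_⟩
  intro z hz
  have hq1ne : q - 1 ≠ 0 := by
    intro h
    rw [sub_eq_zero] at h
    rw [h] at hq1
    simp at hq1
  rw [Dq, h3 z, div_eq_iff (mul_ne_zero hq1ne hz)]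
  ring
end
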